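/- For a group G, an element ζ ∈ G with ζ^ℓ = 1 (ℓ prime), and a positive integer s, the bar-complex boundary of [ζ]^(s) equals ℓ · ([ζ]^(s−1) ∧ [ζ]), where ∧ is the shuffle product. In particular, over coefficients Z/ℓ the chain [ζ]^(s) is a cycle. -/

import Mathlib

open scoped Classical

open Finsupp

/-- Chains of the (normalized) bar complex of `G` over `k`: the free `k`-module
on lists of elements of `G`. -/
abbrev BarChain (G : Type*) [Group G] (k : Type*) [CommRing k] := List G →₀ k

variable {G : Type*} [Group G] {k : Type*} [CommRing k]

/-- The normalized bar symbol `[x₁|...|x_s]`: zero if some entry equals `1`. -/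
noncomputable def barSym (l : List G) : BarChain G k :=
  if (1 : G) ∈ l then 0 else Finsupp.single l 1

/-- Normalization map, killing all basis lists containing `1`. -/
noncomputable def barNorm : BarChain G k →ₗ[k] BarChain G k :=
  Finsupp.lsum k fun l => LinearMap.toSpanSingleton k _ (barSym l)

/-- Merge the `j`-th and `(j+1)`-st entries of a list by multiplying them. -/
def mergeAt (l : List G) (j : ℕ) : List G :=
  l.take j ++ [l.getD j 1 * l.getD (j+1) 1] ++ l.drop (j+2)

/-- The boundary of a bar symbol (normalized convention: symbols with an entry
equal to `1` are zero). -/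
noncomputable def barDList (l : List G) : BarChain G k :=
  if l = [] then 0 else
    barSym l.tail
      + ∑ j ∈ Finset.range (l.length - 1), ((-1 : k)^(j+1)) • barSym (mergeAt l j)
      + ((-1 : k)^l.length) • barSym l.dropLast

/-- The boundary operator of the normalized bar complex. -/
noncomputable def barD : BarChain G k →ₗ[k] BarChain G k :=
  Finsupp.lsum k fun l => LinearMap.toSpanSingleton k _ (barDList l)

/-- The (signed) shuffle of two lists. -/
noncomputable def shuffleList : List G → List G → BarChain G k
  | [], l => Finsupp.single l 1
  | l, [] => Finsupp.single l 1
  | x :: xs, y :: ys =>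
      Finsupp.mapDomain (x :: ·) (shuffleList xs (y :: ys))
        + ((-1 : k)^(xs.length + 1)) • Finsupp.mapDomain (y :: ·) (shuffleList (x :: xs) ys)
  termination_by l1 l2 => l1.length + l2.length

/-- The bilinear shuffle product on bar chains. -/
noncomputable def barSh : BarChain G k →ₗ[k] BarChain G k →ₗ[k] BarChain G k :=
  Finsupp.lsum k fun l1 => LinearMap.toSpanSingleton k _
    ((Finsupp.lsum k fun l2 => LinearMap.toSpanSingleton k _ (shuffleList l1 l2) :
      BarChain G k →ₗ[k] BarChain G k))

/-- The shuffle product in the normalized bar complex. -/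
noncomputable def barNSh (a b : BarChain G k) : BarChain G k :=
  barNorm (barSh a b)

/-- The chain `[ζ]^(s) = Σ_{i₁,...,i_s = 1}^{ℓ-1} [ζ^{i₁}|ζ|...|ζ^{i_s}|ζ]`. -/
noncomputable def zetaChain (ℓ : ℕ) (ζ : G) (s : ℕ) : BarChain G k :=
  ∑ f : Fin s → Fin (ℓ - 1),
    barSym ((List.ofFn (fun j => [ζ ^ ((f j : ℕ) + 1), ζ])).flatten)

/-- The iterated shuffle product `⟨x₁,...,x_i⟩ = [x₁] ∧ ... ∧ [x_i]`. -/
noncomputable def wedgeList (l : List G) : BarChain G k :=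
  l.foldr (fun g acc => barNSh (barSym [g]) acc) (barSym [])

section Aux
variable {G : Type*} [Group G] {k : Type*} [CommRing k]

/-- Prepend-`x` map on normalized chains. -/
noncomputable def conZ (x : G) : BarChain G k →ₗ[k] BarChain G k :=
  Finsupp.lsum k fun l => LinearMap.toSpanSingleton k _ (barSym (x :: l))

lemma barNorm_single (l : List G) (c : k) :
    barNorm (Finsupp.single l c) = c • (barSym l : BarChain G k) := by
  simp [barNorm, Finsupp.lsum_single, LinearMap.toSpanSingleton_apply]

lemma barD_single (l : List G) (c : k) :
    barD (Finsupp.single l c) = c • (barDList l : BarChain G k) := by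
  simp [barD, Finsupp.lsum_single, LinearMap.toSpanSingleton_apply]

lemma conZ_single (x : G) (l : List G) (c : k) :
    conZ x (Finsupp.single l c) = c • (barSym (x :: l) : BarChain G k) := by
  simp [conZ, Finsupp.lsum_single, LinearMap.toSpanSingleton_apply]

lemma conZ_barSym (x : G) (m : List G) :
    conZ x (barSym m : BarChain G k) = barSym (x :: m) := by
  by_cases h : (1 : G) ∈ m
  · rw [show (barSym m : BarChain G k) = 0 by simp only [barSym]; rw [if_pos h], map_zero,
      show (barSym (x :: m) : BarChain G k) = 0 by
        simp only [barSym]; rw [if_pos (List.mem_cons_of_mem _ h)]]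
  · rw [show (barSym m : BarChain G k) = Finsupp.single m 1 by
        simp only [barSym]; rw [if_neg h], conZ_single, one_smul]

lemma barD_barSym (l : List G) (h : (1 : G) ∉ l) :
    barD (barSym l : BarChain G k) = barDList l := by
  rw [show (barSym l : BarChain G k) = Finsupp.single l 1 by
      simp only [barSym]; rw [if_neg h], barD_single, one_smul]

lemma mergeAt_cons_succ (x : G) (m : List G) (j : ℕ) :
    mergeAt (x :: m) (j+1) = x :: mergeAt m j := by
  simp [mergeAt]

lemma mergeAt_cons_zero (x y : G) (t : List G) :
    mergeAt (x :: y :: t) 0 = (x * y) :: t := by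
  simp [mergeAt]

end Aux
section Aux2
variable {G : Type*} [Group G] {k : Type*} [CommRing k]

lemma barDList_cons_cons (x y : G) (t : List G) :
    (barDList (x :: y :: t) : BarChain G k)
      = barSym (y :: t) - barSym ((x * y) :: t) + barSym (x :: t)
        - conZ x (barDList (y :: t)) := by
  have hlen : (x :: y :: t).length - 1 = t.length + 1 := by simp
  have hlen2 : (y :: t).length - 1 = t.length := by simp
  rw [barDList, if_neg (by simp), barDList, if_neg (by simp), hlen, hlen2]
  rw [map_add, map_add, map_sum, map_smul, conZ_barSym]
  simp only [map_smul, conZ_barSym]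
  rw [Finset.sum_range_succ']
  simp only [mergeAt_cons_succ, mergeAt_cons_zero]
  rw [show ((x :: y :: t).dropLast) = x :: (y :: t).dropLast from rfl]
  have e1 : (∑ j ∈ Finset.range t.length,
        (-1:k)^(j+1+1) • (barSym (x :: mergeAt (y::t) j) : BarChain G k))
      = - ∑ j ∈ Finset.range t.length,
        (-1:k)^(j+1) • (barSym (x :: mergeAt (y::t) j) : BarChain G k) := by
    rw [← Finset.sum_neg_distrib]
    exact Finset.sum_congr rfl fun j _ => by
      rw [pow_succ, mul_smul, neg_one_smul, smul_neg]
  rw [e1]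
  have e2 : (-1:k) ^ ((x :: y :: t).length) = -(-1:k) ^ ((y :: t).length) := by
    simp only [List.length_cons]; ring
  rw [e2]
  simp only [List.tail_cons, zero_add, pow_one, neg_one_smul, neg_smul]
  module

end Aux2
section Aux3
variable {G : Type*} [Group G] {k : Type*} [CommRing k]

/-- The list `[ζ^{f 0 + 1}, ζ, ..., ζ^{f (s-1) + 1}, ζ]`. -/
noncomputable def mlist (ζ : G) {n s : ℕ} (f : Fin s → Fin n) : List G :=
  (List.ofFn fun j => [ζ ^ ((f j : ℕ) + 1), ζ]).flatten

lemma zetaChain_eq (ℓ : ℕ) (ζ : G) (s : ℕ) :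
    (zetaChain ℓ ζ s : BarChain G k) = ∑ f : Fin s → Fin (ℓ - 1), barSym (mlist ζ f) := rfl

lemma mlist_cons (ζ : G) {n s : ℕ} (c : Fin n) (f : Fin s → Fin n) :
    mlist ζ (Fin.cons c f) = ζ ^ ((c : ℕ) + 1) :: ζ :: mlist ζ f := by
  simp [mlist, List.ofFn_succ, Fin.cons_zero, Fin.cons_succ]

lemma mlist_length (ζ : G) {n : ℕ} : ∀ {s : ℕ} (f : Fin s → Fin n),
    (mlist ζ f).length = 2 * s := by
  intro s
  induction s with
  | zero => intro f; simp [mlist]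
  | succ s ih =>
      intro f
      rw [← Fin.cons_self_tail f, mlist_cons]
      simp only [List.length_cons, ih (Fin.tail f)]
      omega

lemma one_not_mem_mlist {ℓ : ℕ} {ζ : G} (hp : ℓ.Prime) (hζ : ζ ^ ℓ = 1) (h1 : ζ ≠ 1) :
    ∀ {s : ℕ} (f : Fin s → Fin (ℓ - 1)), (1 : G) ∉ mlist ζ f := by
  haveI : Fact ℓ.Prime := ⟨hp⟩
  have hord : orderOf ζ = ℓ := orderOf_eq_prime hζ h1
  have hpow : ∀ c : Fin (ℓ - 1), ζ ^ ((c : ℕ) + 1) ≠ 1 := by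
    intro c hc
    have hdvd : ℓ ∣ (c : ℕ) + 1 := by have h := orderOf_dvd_of_pow_eq_one hc; rwa [hord] at h
    have h1 : (c : ℕ) + 1 < ℓ := by have := c.isLt; omega
    exact absurd (Nat.le_of_dvd (Nat.succ_pos _) hdvd) (by omega)
  intro s
  induction s with
  | zero => intro f; simp [mlist]
  | succ s ih =>
      intro f
      rw [← Fin.cons_self_tail f, mlist_cons]
      simp only [List.mem_cons, not_or]
      exact ⟨fun h => hpow _ h.symm, fun h => h1 h.symm, ih (Fin.tail f)⟩

lemma sum_pi_cons {M : Type*} [AddCommMonoid M] {n s : ℕ} (F : (Fin (s + 1) → Fin n) → M) :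
    ∑ f, F f = ∑ c : Fin n, ∑ g : Fin s → Fin n, F (Fin.cons c g) := by
  rw [← (Fin.consEquiv (fun _ : Fin (s + 1) => Fin n)).sum_comp F, Fintype.sum_prod_type]
  rfl

lemma telescope {ℓ : ℕ} {ζ : G} (hζ : ζ ^ ℓ = 1) (hℓ : 1 ≤ ℓ) (l : List G) :
    ∑ c : Fin (ℓ - 1), ((barSym (ζ ^ ((c : ℕ) + 1) :: l) : BarChain G k)
        - barSym (ζ ^ ((c : ℕ) + 1 + 1) :: l))
      = barSym (ζ :: l) := by
  rw [Fin.sum_univ_eq_sum_range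
      (fun i => (barSym (ζ ^ (i + 1) :: l) : BarChain G k) - barSym (ζ ^ (i + 1 + 1) :: l)),
    Finset.sum_range_sub' (fun i => (barSym (ζ ^ (i + 1) :: l) : BarChain G k))]
  rw [show ℓ - 1 + 1 = ℓ from Nat.succ_pred_eq_of_pos hℓ, hζ, pow_one]
  rw [show (barSym ((1 : G) :: l) : BarChain G k) = 0 by
    simp only [barSym]; rw [if_pos (List.mem_cons_self (a := (1 : G)) (l := l))]]
  rw [sub_zero]

end Aux3
section Aux4
variable {G : Type*} [Group G] {k : Type*} [CommRing k]

lemma barD_zeta_succ {ℓ : ℕ} {ζ : G} (hp : ℓ.Prime) (hζ : ζ ^ ℓ = 1) (h1 : ζ ≠ 1) (s : ℕ) :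
    barD (zetaChain ℓ ζ (s + 1) : BarChain G k)
      = ∑ c : Fin (ℓ - 1), ∑ g : Fin s → Fin (ℓ - 1),
          barDList (ζ ^ ((c : ℕ) + 1) :: ζ :: mlist ζ g) := by
  rw [zetaChain_eq, map_sum, sum_pi_cons (fun f => barD (barSym (mlist ζ f) : BarChain G k))]
  refine Finset.sum_congr rfl fun c _ => Finset.sum_congr rfl fun g _ => ?_
  rw [barD_barSym _ (one_not_mem_mlist hp hζ h1 _), mlist_cons]

lemma Gstep {ℓ : ℕ} {ζ : G} (hp : ℓ.Prime) (hζ : ζ ^ ℓ = 1) (h1 : ζ ≠ 1) (s : ℕ)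
    (H : (∑ f : Fin s → Fin (ℓ - 1), (barDList (ζ :: mlist ζ f) : BarChain G k)) = 0) :
    barD (zetaChain ℓ ζ (s + 1) : BarChain G k)
      = (ℓ : k) • ∑ f : Fin s → Fin (ℓ - 1), (barSym (ζ :: mlist ζ f) : BarChain G k) := by
  rw [barD_zeta_succ hp hζ h1 s]
  have hterm : ∀ c : Fin (ℓ - 1), ∀ g : Fin s → Fin (ℓ - 1),
      (barDList (ζ ^ ((c : ℕ) + 1) :: ζ :: mlist ζ g) : BarChain G k)
        = barSym (ζ :: mlist ζ g)
          + (barSym (ζ ^ ((c : ℕ) + 1) :: mlist ζ g)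
              - barSym (ζ ^ ((c : ℕ) + 1 + 1) :: mlist ζ g))
          - conZ (ζ ^ ((c : ℕ) + 1)) (barDList (ζ :: mlist ζ g)) := by
    intro c g
    rw [barDList_cons_cons, ← pow_succ]
    module
  simp only [hterm]
  simp only [Finset.sum_sub_distrib, Finset.sum_add_distrib]
  have hT4 : (∑ c : Fin (ℓ - 1), ∑ g : Fin s → Fin (ℓ - 1),
      conZ (ζ ^ ((c : ℕ) + 1)) (barDList (ζ :: mlist ζ g) : BarChain G k)) = 0 := by
    refine Finset.sum_eq_zero fun c _ => ?_
    rw [← map_sum, H, map_zero]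
  rw [hT4, sub_zero]
  have hT23 : (∑ c : Fin (ℓ - 1), ∑ g : Fin s → Fin (ℓ - 1),
        (barSym (ζ ^ ((c : ℕ) + 1) :: mlist ζ g) : BarChain G k))
      - (∑ c : Fin (ℓ - 1), ∑ g : Fin s → Fin (ℓ - 1),
        (barSym (ζ ^ ((c : ℕ) + 1 + 1) :: mlist ζ g) : BarChain G k))
      = ∑ g : Fin s → Fin (ℓ - 1), (barSym (ζ :: mlist ζ g) : BarChain G k) := by
    rw [← Finset.sum_sub_distrib]
    simp only [← Finset.sum_sub_distrib]
    rw [Finset.sum_comm]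
    exact Finset.sum_congr rfl fun g _ => telescope hζ hp.one_le _
  have hc : ℓ - 1 + 1 = ℓ := by have := hp.two_le; omega
  rw [hT23, Finset.sum_const, Finset.card_univ, Fintype.card_fin, ← succ_nsmul, hc,
    Nat.cast_smul_eq_nsmul]

lemma Hcycle {ℓ : ℕ} {ζ : G} (hp : ℓ.Prime) (hζ : ζ ^ ℓ = 1) (h1 : ζ ≠ 1) :
    ∀ s : ℕ, (∑ f : Fin s → Fin (ℓ - 1), (barDList (ζ :: mlist ζ f) : BarChain G k)) = 0 := by
  intro s
  induction s with
  | zero =>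
      refine Finset.sum_eq_zero fun f _ => ?_
      have h0 : mlist ζ f = [] := by simp [mlist]
      rw [h0]
      show (barDList [ζ] : BarChain G k) = 0
      rw [barDList, if_neg (by simp)]
      simp
  | succ s ih =>
      rw [sum_pi_cons (fun f => (barDList (ζ :: mlist ζ f) : BarChain G k))]
      have hterm : ∀ c : Fin (ℓ - 1), ∀ g : Fin s → Fin (ℓ - 1),
          (barDList (ζ :: mlist ζ (Fin.cons c g)) : BarChain G k)
            = (barSym (ζ ^ ((c : ℕ) + 1) :: ζ :: mlist ζ g)
                - barSym (ζ ^ ((c : ℕ) + 1 + 1) :: ζ :: mlist ζ g))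
              + barSym (ζ :: ζ :: mlist ζ g)
              - conZ ζ (barDList (ζ ^ ((c : ℕ) + 1) :: ζ :: mlist ζ g)) := by
        intro c g
        rw [mlist_cons, barDList_cons_cons, ← pow_succ']
      simp only [hterm]
      simp only [Finset.sum_sub_distrib, Finset.sum_add_distrib]
      have hT4 : (∑ c : Fin (ℓ - 1), ∑ g : Fin s → Fin (ℓ - 1),
          conZ ζ (barDList (ζ ^ ((c : ℕ) + 1) :: ζ :: mlist ζ g) : BarChain G k))
          = (ℓ : k) • ∑ g : Fin s → Fin (ℓ - 1),
              (barSym (ζ :: ζ :: mlist ζ g) : BarChain G k) := by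
        have e1 : ∀ c : Fin (ℓ - 1),
            (∑ g : Fin s → Fin (ℓ - 1),
              conZ ζ (barDList (ζ ^ ((c : ℕ) + 1) :: ζ :: mlist ζ g) : BarChain G k))
            = conZ ζ (∑ g : Fin s → Fin (ℓ - 1),
              (barDList (ζ ^ ((c : ℕ) + 1) :: ζ :: mlist ζ g) : BarChain G k)) :=
          fun c => (map_sum (conZ ζ) _ _).symm
        simp only [e1]
        rw [← map_sum (conZ ζ) _ Finset.univ, ← barD_zeta_succ hp hζ h1 s,
          Gstep hp hζ h1 s ih, map_smul, map_sum]
        simp only [conZ_barSym]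
      rw [hT4]
      have hT12 : (∑ c : Fin (ℓ - 1), ∑ g : Fin s → Fin (ℓ - 1),
            (barSym (ζ ^ ((c : ℕ) + 1) :: ζ :: mlist ζ g) : BarChain G k))
          - (∑ c : Fin (ℓ - 1), ∑ g : Fin s → Fin (ℓ - 1),
            (barSym (ζ ^ ((c : ℕ) + 1 + 1) :: ζ :: mlist ζ g) : BarChain G k))
          = ∑ g : Fin s → Fin (ℓ - 1), (barSym (ζ :: ζ :: mlist ζ g) : BarChain G k) := by
        rw [← Finset.sum_sub_distrib]
        simp only [← Finset.sum_sub_distrib]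
        rw [Finset.sum_comm]
        exact Finset.sum_congr rfl fun g _ => telescope hζ hp.one_le _
      have hc : ℓ - 1 + 1 = ℓ := by have := hp.two_le; omega
      rw [hT12, Finset.sum_const, Finset.card_univ, Fintype.card_fin, ← succ_nsmul', hc,
        Nat.cast_smul_eq_nsmul, sub_self]

end Aux4
section Aux5
variable {G : Type*} [Group G] {k : Type*} [CommRing k]

lemma shuffleList_nil_right (l : List G) :
    (shuffleList l [] : BarChain G k) = Finsupp.single l 1 := by
  cases l with
  | nil => rw [shuffleList]
  | cons h t => rw [shuffleList]; simp

lemma shuffleList_cons_cons (x : G) (xs : List G) (y : G) (ys : List G) :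
    (shuffleList (x :: xs) (y :: ys) : BarChain G k)
      = Finsupp.mapDomain (x :: ·) (shuffleList xs (y :: ys))
        + ((-1 : k)^(xs.length + 1)) • Finsupp.mapDomain (y :: ·) (shuffleList (x :: xs) ys) := by
  rw [shuffleList]

lemma barNorm_mapDomain_cons (x : G) (v : BarChain G k) :
    barNorm (Finsupp.mapDomain (x :: ·) v) = conZ x (barNorm v) := by
  induction v using Finsupp.induction_linear with
  | zero => simp
  | add f g hf hg => rw [Finsupp.mapDomain_add, map_add, hf, hg, map_add, map_add]
  | single l c =>
      rw [Finsupp.mapDomain_single, barNorm_single, barNorm_single, map_smul, conZ_barSym]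

lemma shuffle_norm {ℓ : ℕ} (ζ : G) :
    ∀ {s : ℕ} (f : Fin s → Fin (ℓ - 1)),
      barNorm (shuffleList (mlist ζ f) [ζ] : BarChain G k) = barSym (ζ :: mlist ζ f) := by
  intro s
  induction s with
  | zero =>
      intro f
      have h0 : mlist ζ f = [] := by simp [mlist]
      rw [h0, shuffleList, barNorm_single, one_smul]
  | succ s ih =>
      intro f
      rw [← Fin.cons_self_tail f, mlist_cons]
      set a := ζ ^ ((f 0 : ℕ) + 1) with ha
      set r := mlist ζ (Fin.tail f) with hr
      have hlr : r.length = 2 * s := mlist_length ζ (Fin.tail f)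
      rw [shuffleList_cons_cons, shuffleList_nil_right]
      rw [shuffleList_cons_cons, shuffleList_nil_right]
      have hs1 : ((-1 : k) ^ ((ζ :: r).length + 1)) = 1 := by
        simp only [List.length_cons, hlr]
        rw [show 2 * s + 1 + 1 = 2 * (s + 1) from by ring]
        exact Even.neg_one_pow (even_two_mul _)
      have hs2 : ((-1 : k) ^ (r.length + 1)) = -1 := by
        rw [hlr]
        exact Odd.neg_one_pow ⟨s, by ring⟩
      rw [hs1, hs2, one_smul, neg_one_smul]
      simp only [map_add, map_neg, barNorm_mapDomain_cons, barNorm_single, one_smul]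
      rw [hr, ih (Fin.tail f), add_neg_cancel, zero_add, conZ_barSym]

end Aux5
section Aux6
variable {G : Type*} [Group G] {k : Type*} [CommRing k]

lemma barSh_single (l1 l2 : List G) :
    barSh (Finsupp.single l1 (1 : k)) (Finsupp.single l2 (1 : k)) = shuffleList l1 l2 := by
  simp [barSh, Finsupp.lsum_single, LinearMap.toSpanSingleton_apply]

lemma rhs_eq {ℓ : ℕ} {ζ : G} (hp : ℓ.Prime) (hζ : ζ ^ ℓ = 1) (h1 : ζ ≠ 1) (t : ℕ) :
    barNSh (zetaChain ℓ ζ t : BarChain G k) (barSym [ζ])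
      = ∑ f : Fin t → Fin (ℓ - 1), (barSym (ζ :: mlist ζ f) : BarChain G k) := by
  rw [barNSh, zetaChain_eq]
  rw [show (barSh (∑ f : Fin t → Fin (ℓ - 1), (barSym (mlist ζ f) : BarChain G k))
        (barSym [ζ]))
      = ∑ f : Fin t → Fin (ℓ - 1),
          barSh (barSym (mlist ζ f) : BarChain G k) (barSym [ζ]) from by
    rw [map_sum, LinearMap.sum_apply]]
  rw [map_sum]
  refine Finset.sum_congr rfl fun f _ => ?_
  have hm : (1 : G) ∉ [ζ] := by
    intro hm; exact h1 (List.mem_singleton.mp hm).symm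
  rw [show (barSym (mlist ζ f) : BarChain G k) = Finsupp.single (mlist ζ f) 1 from by
      simp only [barSym]; rw [if_neg (one_not_mem_mlist hp hζ h1 f)],
    show (barSym [ζ] : BarChain G k) = Finsupp.single [ζ] 1 from by
      simp only [barSym]; rw [if_neg hm]]
  rw [barSh_single]
  exact shuffle_norm ζ f

lemma main_eq {ℓ : ℕ} (hp : ℓ.Prime) {ζ : G} (hζ : ζ ^ ℓ = 1) (s : ℕ) (hs : 0 < s) :
    barD (zetaChain ℓ ζ s : BarChain G k)
      = (ℓ : k) • barNSh (zetaChain ℓ ζ (s - 1)) (barSym [ζ]) := by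
  obtain ⟨t, rfl⟩ : ∃ t, s = t + 1 := ⟨s - 1, by omega⟩
  rw [show t + 1 - 1 = t from rfl]
  by_cases h1 : ζ = 1
  · subst h1
    have hz : (zetaChain ℓ (1 : G) (t + 1) : BarChain G k) = 0 := by
      rw [zetaChain_eq]
      refine Finset.sum_eq_zero fun f _ => ?_
      have hmem : (1 : G) ∈ mlist (1 : G) f := by
        rw [← Fin.cons_self_tail f, mlist_cons]
        exact List.mem_cons_of_mem _ List.mem_cons_self
      simp only [barSym]; rw [if_pos hmem]
    have hz2 : (barSym [(1 : G)] : BarChain G k) = 0 := by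
      simp only [barSym]; rw [if_pos (List.mem_singleton.mpr rfl)]
    rw [hz, map_zero, hz2, barNSh, map_zero, map_zero, smul_zero]
  · rw [Gstep hp hζ h1 t (Hcycle hp hζ h1 t), rhs_eq hp hζ h1 t]

end Aux6

/-- `∂([ζ]^(s)) = ℓ · ([ζ]^(s-1) ∧ [ζ])`; in particular over `ℤ/ℓ`
the chain `[ζ]^(s)` is a cycle. -/
theorem stmt1 {G : Type*} [Group G]
    (ℓ : ℕ) (hℓ : ℓ.Prime) (ζ : G) (hζ : ζ ^ ℓ = 1) (s : ℕ) (hs : 0 < s) :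
    (∀ (k : Type) (_ : CommRing k),
      barD (zetaChain ℓ ζ s : BarChain G k)
        = (ℓ : k) • barNSh (zetaChain ℓ ζ (s - 1)) (barSym [ζ])) ∧
    barD (zetaChain ℓ ζ s : BarChain G (ZMod ℓ)) = 0 := by
  constructor
  · intro k hk
    exact main_eq hℓ hζ s hs
  · rw [main_eq (k := ZMod ℓ) hℓ hζ s hs, ZMod.natCast_self, zero_smul]
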